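/- Let X₁, ..., Xₙ be independent random variables, Xᵢ taking values in a set 𝒳ᵢ, and let f : 𝒳₁ × ⋯ × 𝒳ₙ → ℝ satisfy the bounded differences condition with constants c₁, ..., cₙ: changing the i-th coordinate changes f by at most cᵢ. Then for every ε > 0, P(|f(X₁,...,Xₙ) - E f(X₁,...,Xₙ)| ≥ ε) ≤ 2 exp(-2ε² / Σᵢ cᵢ²). -/

import Mathlib

open MeasureTheory ProbabilityTheory Real

universe u

lemma mcd_key (p : ℝ) (hp0 : 0 ≤ p) (hp1 : p ≤ 1) (u : ℝ) :
    1 - p + p * Real.exp u ≤ Real.exp (p * u + u ^ 2 / 8) := by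
  have hD : ∀ v : ℝ, 0 < 1 - p + p * Real.exp v := by
    intro v
    nlinarith [Real.exp_pos v, mul_nonneg hp0 (Real.exp_pos v).le,
      mul_le_of_le_one_left (Real.exp_pos v).le hp1]
  set D : ℝ → ℝ := fun v => 1 - p + p * Real.exp v with hDdef
  have hDd : ∀ v : ℝ, HasDerivAt D (p * Real.exp v) v := fun v =>
    ((Real.hasDerivAt_exp v).const_mul p).const_add (1 - p)
  set G' : ℝ → ℝ := fun v => p + v / 4 - p * Real.exp v / D v with hG'def
  set G : ℝ → ℝ := fun v => p * v + v ^ 2 / 8 - Real.log (D v) with hGdef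
  have hGd : ∀ v : ℝ, HasDerivAt G (G' v) v := by
    intro v
    have h1 : HasDerivAt (fun x : ℝ => p * x) p v := by
      simpa using (hasDerivAt_id v).const_mul p
    have h2 : HasDerivAt (fun x : ℝ => x ^ 2 / 8) (v / 4) v := by
      have := (hasDerivAt_pow 2 v).div_const 8
      refine this.congr_deriv ?_
      ring
    have h3 : HasDerivAt (fun x => Real.log (D x)) (p * Real.exp v / D v) v :=
      (hDd v).log (hD v).ne'
    exact (h1.add h2).sub h3
  have hG'd : ∀ v : ℝ, HasDerivAt G' (1 / 4 - p * (1 - p) * Real.exp v / (D v) ^ 2) v := by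
    intro v
    have h1 : HasDerivAt (fun x : ℝ => p + x / 4) (1 / 4) v := by
      simpa using ((hasDerivAt_id v).div_const 4).const_add p
    have h2 : HasDerivAt (fun x => p * Real.exp x / D x)
        ((p * Real.exp v * D v - p * Real.exp v * (p * Real.exp v)) / (D v) ^ 2) v :=
      ((Real.hasDerivAt_exp v).const_mul p).div (hDd v) (hD v).ne'
    have h3 : (p * Real.exp v * D v - p * Real.exp v * (p * Real.exp v)) / (D v) ^ 2
        = p * (1 - p) * Real.exp v / (D v) ^ 2 := by
      rw [hDdef]
      ring_nf
    rw [h3] at h2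
    exact h1.sub h2
  have hG''nonneg : ∀ v : ℝ, 0 ≤ 1 / 4 - p * (1 - p) * Real.exp v / (D v) ^ 2 := by
    intro v
    rw [sub_nonneg, div_le_iff₀ (by have := hD v; positivity : (0:ℝ) < (D v) ^ 2)]
    have : (D v) ^ 2 = (1 - p + p * Real.exp v) ^ 2 := rfl
    nlinarith [sq_nonneg (1 - p - p * Real.exp v), Real.exp_pos v]
  have hG'mono : Monotone G' := by
    apply monotone_of_deriv_nonneg
    · exact fun v => (hG'd v).differentiableAt
    · intro v
      rw [(hG'd v).deriv]
      exact hG''nonneg v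
  have hG'0 : G' 0 = 0 := by
    simp [hG'def, hDdef, Real.exp_zero]
  have hGcont : Continuous G := by
    have : Differentiable ℝ G := fun v => (hGd v).differentiableAt
    exact this.continuous
  have hG0 : G 0 = 0 := by
    simp [hGdef, hDdef, Real.exp_zero]
  have hGnonneg : ∀ v : ℝ, 0 ≤ G v := by
    intro v
    rcases le_total 0 v with hv | hv
    · have hmono : MonotoneOn G (Set.Ici (0:ℝ)) := by
        apply monotoneOn_of_deriv_nonneg (convex_Ici 0) hGcont.continuousOn
        · exact fun x _ => (hGd x).differentiableAt.differentiableWithinAt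
        · intro x hx
          rw [(hGd x).deriv]
          rw [interior_Ici] at hx
          calc (0:ℝ) = G' 0 := hG'0.symm
          _ ≤ G' x := hG'mono (le_of_lt hx)
      calc (0:ℝ) = G 0 := hG0.symm
      _ ≤ G v := hmono (by simp) (by simpa using hv) hv
    · have hmono : AntitoneOn G (Set.Iic (0:ℝ)) := by
        apply antitoneOn_of_deriv_nonpos (convex_Iic 0) hGcont.continuousOn
        · exact fun x _ => (hGd x).differentiableAt.differentiableWithinAt
        · intro x hx
          rw [(hGd x).deriv]
          rw [interior_Iic] at hx
          calc G' x ≤ G' 0 := hG'mono (le_of_lt hx)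
          _ = 0 := hG'0
      calc (0:ℝ) = G 0 := hG0.symm
      _ ≤ G v := hmono (by simpa using hv) (by simp) hv
  have hlog : Real.log (D u) ≤ p * u + u ^ 2 / 8 := by
    have := hGnonneg u
    rw [hGdef] at this
    linarith [this]
  calc 1 - p + p * Real.exp u = D u := rfl
  _ = Real.exp (Real.log (D u)) := (Real.exp_log (hD u)).symm
  _ ≤ Real.exp (p * u + u ^ 2 / 8) := Real.exp_le_exp.mpr hlog


lemma mcd_nonempty {α : Type u} [MeasurableSpace α] (ν : Measure α) [IsProbabilityMeasure ν] :
    Nonempty α := by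
  by_contra hne
  rw [not_nonempty_iff] at hne
  have h1 : ν Set.univ = 1 := measure_univ
  rw [show (Set.univ : Set α) = ∅ from Set.univ_eq_empty_iff.mpr hne, measure_empty] at h1
  exact zero_ne_one h1

lemma mcd_hoeffding {α : Type u} [MeasurableSpace α] (ν : Measure α) [IsProbabilityMeasure ν]
    (h : α → ℝ) (hmeas : Measurable h) {B : ℝ} (hB : ∀ a, |h a| ≤ B)
    {c : ℝ} (hc : ∀ a b, |h a - h b| ≤ c) (t : ℝ) :
    ∫ a, Real.exp (t * h a) ∂ν ≤ Real.exp (t * ∫ a, h a ∂ν + t ^ 2 * c ^ 2 / 8) := by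
  haveI hne : Nonempty α := mcd_nonempty ν
  have a₀ : α := Classical.arbitrary α
  have hc0 : 0 ≤ c := le_trans (abs_nonneg _) (hc a₀ a₀)
  rcases eq_or_lt_of_le hc0 with hc0' | hcpos
  · -- c = 0 : h is constant
    have hconst : ∀ a, h a = h a₀ := by
      intro a
      have := hc a a₀
      rw [← hc0'] at this
      have := abs_nonpos_iff.mp this
      linarith [sub_eq_zero.mp this]
    have h1 : (fun a => Real.exp (t * h a)) = fun _ => Real.exp (t * h a₀) := by
      funext a; rw [hconst a]
    have h2 : (fun a => h a) = fun _ => h a₀ := by funext a; exact hconst a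
    rw [h1, h2, integral_const, integral_const]
    simp [← hc0']
  · -- c > 0
    have hIh : Integrable h ν :=
      (integrable_const B).mono' hmeas.aestronglyMeasurable
        (Filter.Eventually.of_forall fun a => by simpa using hB a)
    have hbdd : BddBelow (Set.range h) := ⟨-B, fun x ⟨a, ha⟩ => ha ▸ (abs_le.1 (hB a)).1⟩
    set m : ℝ := ⨅ a, h a with hm
    have hm_le : ∀ a, m ≤ h a := fun a => ciInf_le hbdd a
    have h_le : ∀ a, h a ≤ m + c := by
      intro a
      have : h a - c ≤ m := le_ciInf fun b => by
        have := (abs_le.1 (hc a b)).2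
        linarith
      linarith
    set M : ℝ := ∫ a, h a ∂ν with hM
    have hmM : m ≤ M := by
      have := integral_mono (integrable_const m) hIh hm_le
      simpa using this
    have hMc : M ≤ m + c := by
      have := integral_mono hIh (integrable_const (m + c)) h_le
      simpa using this
    set p : ℝ := (M - m) / c with hp
    have hp0 : 0 ≤ p := div_nonneg (by linarith) hcpos.le
    have hp1 : p ≤ 1 := (div_le_one hcpos).mpr (by linarith)
    -- pointwise convexity bound
    have hpt : ∀ a, Real.exp (t * h a) ≤
        (1 - (h a - m) / c) * Real.exp (t * m) + (h a - m) / c * Real.exp (t * (m + c)) := by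
      intro a
      set s : ℝ := (h a - m) / c with hs
      have hs0 : 0 ≤ s := div_nonneg (by linarith [hm_le a]) hcpos.le
      have hs1 : s ≤ 1 := (div_le_one hcpos).mpr (by linarith [h_le a])
      have hsum : (1 - s) + s = 1 := by ring
      have := convexOn_exp.2 (Set.mem_univ (t * m)) (Set.mem_univ (t * (m + c)))
        (by linarith) hs0 hsum
      have hsc : s * c = h a - m := div_mul_cancel₀ _ hcpos.ne'
      simp only [smul_eq_mul] at this
      have harg : (1 - s) * (t * m) + s * (t * (m + c)) = t * h a := by
        linear_combination t * hsc
      rw [harg] at this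
      exact this
    -- integrate
    have hIs : Integrable (fun a => (h a - m) / c) ν := (hIh.sub (integrable_const m)).div_const c
    have hIrhs : Integrable (fun a =>
        (1 - (h a - m) / c) * Real.exp (t * m) + (h a - m) / c * Real.exp (t * (m + c))) ν := by
      apply Integrable.add
      · exact ((integrable_const 1).sub hIs).mul_const _
      · exact hIs.mul_const _
    have hIlhs : Integrable (fun a => Real.exp (t * h a)) ν := by
      apply (integrable_const (Real.exp (|t| * B))).mono' (hmeas.const_mul t).exp.aestronglyMeasurable
      apply Filter.Eventually.of_forall
      intro a
      rw [Real.norm_eq_abs, abs_of_pos (Real.exp_pos _)]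
      apply Real.exp_le_exp.mpr
      calc t * h a ≤ |t * h a| := le_abs_self _
      _ = |t| * |h a| := abs_mul t (h a)
      _ ≤ |t| * B := by
          apply mul_le_mul_of_nonneg_left (hB a) (abs_nonneg t)
    have hint_le : ∫ a, Real.exp (t * h a) ∂ν ≤
        (1 - p) * Real.exp (t * m) + p * Real.exp (t * (m + c)) := by
      calc ∫ a, Real.exp (t * h a) ∂ν
          ≤ ∫ a, ((1 - (h a - m) / c) * Real.exp (t * m)
              + (h a - m) / c * Real.exp (t * (m + c))) ∂ν := integral_mono hIlhs hIrhs hpt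
        _ = (1 - p) * Real.exp (t * m) + p * Real.exp (t * (m + c)) := by
            have hrw : ∀ a : α, (1 - (h a - m) / c) * Real.exp (t * m)
                + (h a - m) / c * Real.exp (t * (m + c))
                = Real.exp (t * m) + (h a - m) / c * (Real.exp (t * (m + c)) - Real.exp (t * m)) := by
              intro a; ring
            simp only [hrw]
            rw [integral_add (integrable_const _) (hIs.mul_const _), integral_mul_const,
              integral_const, integral_div, integral_sub hIh (integrable_const m),
              integral_const]
            simp only [measure_univ, probReal_univ, ENNReal.toReal_one, one_smul, smul_eq_mul, mul_one]
            rw [← hM]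
            ring
    calc ∫ a, Real.exp (t * h a) ∂ν
        ≤ (1 - p) * Real.exp (t * m) + p * Real.exp (t * (m + c)) := hint_le
      _ = Real.exp (t * m) * (1 - p + p * Real.exp (t * c)) := by
          rw [mul_add, Real.exp_add]; ring
      _ ≤ Real.exp (t * m) * Real.exp (p * (t * c) + (t * c) ^ 2 / 8) := by
          apply mul_le_mul_of_nonneg_left (mcd_key p hp0 hp1 (t * c)) (Real.exp_pos _).le
      _ = Real.exp (t * m + (p * (t * c) + (t * c) ^ 2 / 8)) := (Real.exp_add _ _).symm
      _ = Real.exp (t * M + t ^ 2 * c ^ 2 / 8) := by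
          have hpc : p * c = M - m := div_mul_cancel₀ _ hcpos.ne'
          congr 1
          linear_combination t * hpc

lemma mcd_diff_le {n : ℕ} {𝒳 : Fin n → Type u} (f : (∀ i, 𝒳 i) → ℝ) (c : Fin n → ℝ)
    (hbd : ∀ (i : Fin n) (x : ∀ j, 𝒳 j) (x' : 𝒳 i),
      |f x - f (Function.update x i x')| ≤ c i) (x y : ∀ i, 𝒳 i) :
    |f x - f y| ≤ ∑ i, c i := by
  classical
  have key : ∀ s : Finset (Fin n), |f x - f (s.piecewise y x)| ≤ ∑ i ∈ s, c i := by
    intro s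
    induction s using Finset.induction with
    | empty => simp
    | @insert j s' hj ih =>
      rw [Finset.piecewise_insert, Finset.sum_insert hj]
      calc |f x - f (Function.update (s'.piecewise y x) j (y j))|
          ≤ |f x - f (s'.piecewise y x)|
            + |f (s'.piecewise y x) - f (Function.update (s'.piecewise y x) j (y j))| := by
            have := abs_sub_le (f x) (f (s'.piecewise y x))
              (f (Function.update (s'.piecewise y x) j (y j)))
            linarith
        _ ≤ (∑ i ∈ s', c i) + c j := add_le_add ih (hbd j _ _)
        _ = c j + ∑ i ∈ s', c i := by ring
  have := key Finset.univ
  rwa [Finset.piecewise_univ] at this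

lemma mcd_insertNth_update {n : ℕ} {α : Fin (n + 1) → Type u} (i : Fin (n + 1)) (a : α i)
    (y : ∀ j, α (i.succAbove j)) (j : Fin n) (b : α (i.succAbove j)) :
    i.insertNth a (Function.update y j b)
      = Function.update (i.insertNth a y) (i.succAbove j) b := by
  ext k
  refine Fin.succAboveCases i ?_ ?_ k
  · rw [Function.update_of_ne (Fin.succAbove_ne i j).symm]
    simp
  · intro j'
    rcases eq_or_ne j' j with rfl | hjj
    · simp
    · have hne : i.succAbove j' ≠ i.succAbove j :=
        fun hh => hjj (Fin.succAbove_right_injective hh)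
      rw [Function.update_of_ne hne, Fin.insertNth_apply_succAbove,
        Fin.insertNth_apply_succAbove, Function.update_of_ne hjj]

lemma mcd_integrable_of_bound {α : Type u} [MeasurableSpace α] (μ : Measure α)
    [IsFiniteMeasure μ] (f : α → ℝ) (hf : AEStronglyMeasurable f μ) (B : ℝ)
    (hB : ∀ a, |f a| ≤ B) : Integrable f μ :=
  (integrable_const B).mono' hf (Filter.Eventually.of_forall fun a => by simpa using hB a)

lemma mcd_mgf_pi : ∀ (n : ℕ) (𝒳 : Fin n → Type u) (inst : ∀ i, MeasurableSpace (𝒳 i))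
    (P : ∀ i, Measure (𝒳 i)) (hprob : ∀ i, IsProbabilityMeasure (P i))
    (f : (∀ i, 𝒳 i) → ℝ) (hf : Measurable f) (B : ℝ) (hB : ∀ x, |f x| ≤ B)
    (c : Fin n → ℝ)
    (hbd : ∀ (i : Fin n) (x : ∀ j, 𝒳 j) (x' : 𝒳 i),
      |f x - f (Function.update x i x')| ≤ c i) (t : ℝ),
    ∫ x, Real.exp (t * f x) ∂(Measure.pi P) ≤
      Real.exp (t * ∫ x, f x ∂(Measure.pi P) + t ^ 2 * (∑ i, c i ^ 2) / 8) := by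
  intro n
  induction n with
  | zero =>
    intro 𝒳 inst P hprob f hf B hB c hbd t
    haveI := hprob
    have hconst : ∀ x : ∀ i, 𝒳 i, f x = f (fun i => i.elim0) := by
      intro x; congr 1; funext i; exact i.elim0
    have h1 : (fun x => Real.exp (t * f x)) = fun _ : (∀ i, 𝒳 i) => Real.exp (t * f (fun i => i.elim0)) := by
      funext x; rw [hconst x]
    have h2 : f = fun _ : (∀ i, 𝒳 i) => f (fun i => i.elim0) := by
      funext x; exact hconst x
    rw [h1]
    conv_rhs => rw [h2]
    rw [integral_const, integral_const]
    simp
  | succ n IH =>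
    intro 𝒳 inst P hprob f hf B hB c hbd t
    haveI := hprob
    classical
    set e := MeasurableEquiv.piFinSuccAbove 𝒳 0 with he
    set ν := P 0 with hν
    set τ := Measure.pi (fun j => P ((0 : Fin (n + 1)).succAbove j)) with hτ
    have mp : MeasurePreserving e (Measure.pi P) (ν.prod τ) :=
      measurePreserving_piFinSuccAbove P 0
    set E := e.trans MeasurableEquiv.prodComm with hE
    have mpE : MeasurePreserving E (Measure.pi P) (τ.prod ν) := by
      have h2 := (Measure.measurePreserving_swap).comp mp
      refine ⟨E.measurable, ?_⟩
      have hcoe : ⇑E = Prod.swap ∘ ⇑e := by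
        rw [hE, MeasurableEquiv.coe_trans]
        rfl
      rw [hcoe]
      exact h2.map_eq
    set G : ((∀ j : Fin n, 𝒳 ((0 : Fin (n + 1)).succAbove j)) × 𝒳 0) → ℝ :=
      fun q => f ((0 : Fin (n + 1)).insertNth q.2 q.1) with hG
    have hGmeas : Measurable G := by
      apply hf.comp
      exact (e.symm.measurable).comp measurable_swap
    have hins : ∀ x : ∀ i, 𝒳 i,
        (0 : Fin (n + 1)).insertNth (x 0) (fun j => x ((0 : Fin (n + 1)).succAbove j)) = x := by
      intro x
      exact Fin.insertNth_self_removeNth 0 x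
    have hGE : ∀ x, G (E x) = f x := by
      intro x
      have hEx : E x = ((fun j => x ((0 : Fin (n + 1)).succAbove j)), x 0) := rfl
      rw [hEx, hG]
      exact congrArg f (hins x)
    have hGB : ∀ q, |G q| ≤ B := fun q => hB _
    -- integrability of things on the product
    have hIexpG : Integrable (fun q => Real.exp (t * G q)) (τ.prod ν) := by
      apply mcd_integrable_of_bound _ _ ((hGmeas.const_mul t).exp).aestronglyMeasurable
        (Real.exp (|t| * B))
      intro q
      rw [abs_of_pos (Real.exp_pos _)]
      apply Real.exp_le_exp.mpr
      calc t * G q ≤ |t * G q| := le_abs_self _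
        _ = |t| * |G q| := abs_mul _ _
        _ ≤ |t| * B := mul_le_mul_of_nonneg_left (hGB q) (abs_nonneg t)
    have hIG : Integrable G (τ.prod ν) :=
      mcd_integrable_of_bound _ _ hGmeas.aestronglyMeasurable B hGB
    -- the conditional function g
    set g : (∀ j : Fin n, 𝒳 ((0 : Fin (n + 1)).succAbove j)) → ℝ :=
      fun y => ∫ a, G (y, a) ∂ν with hg
    have hgmeas : Measurable g :=
      (hGmeas.stronglyMeasurable.integral_prod_right').measurable
    have hgB : ∀ y, |g y| ≤ B := by
      intro y
      rw [← Real.norm_eq_abs]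
      calc ‖g y‖ ≤ ∫ _, B ∂ν := norm_integral_le_of_norm_le (integrable_const B)
            (Filter.Eventually.of_forall fun a => by simpa using hGB (y, a))
        _ = B := by simp
    -- bounded differences for g
    have hgbd : ∀ (j : Fin n) (y : ∀ k, 𝒳 ((0 : Fin (n + 1)).succAbove k))
        (b : 𝒳 ((0 : Fin (n + 1)).succAbove j)),
        |g y - g (Function.update y j b)| ≤ c ((0 : Fin (n + 1)).succAbove j) := by
      intro j y b
      have hI1 : Integrable (fun a => G (y, a)) ν :=
        mcd_integrable_of_bound _ _ (hGmeas.comp measurable_prodMk_left).aestronglyMeasurable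
          B (fun a => hGB _)
      have hI2 : Integrable (fun a => G (Function.update y j b, a)) ν :=
        mcd_integrable_of_bound _ _ (hGmeas.comp measurable_prodMk_left).aestronglyMeasurable
          B (fun a => hGB _)
      rw [hg]
      simp only
      rw [← integral_sub hI1 hI2, ← Real.norm_eq_abs]
      calc ‖∫ a, (G (y, a) - G (Function.update y j b, a)) ∂ν‖
          ≤ ∫ _, c ((0 : Fin (n + 1)).succAbove j) ∂ν := by
            apply norm_integral_le_of_norm_le (integrable_const _)
            apply Filter.Eventually.of_forall
            intro a
            rw [Real.norm_eq_abs]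
            have h3 : G (Function.update y j b, a)
                = f (Function.update ((0 : Fin (n + 1)).insertNth a y)
                    ((0 : Fin (n + 1)).succAbove j) b) := by
              show f ((0 : Fin (n + 1)).insertNth a (Function.update y j b)) = _
              rw [mcd_insertNth_update]
            have h4 : G (y, a) = f ((0 : Fin (n + 1)).insertNth a y) := rfl
            rw [h3, h4]
            exact hbd _ _ _
        _ = c ((0 : Fin (n + 1)).succAbove j) := by simp
    -- pointwise Hoeffding in the first coordinate
    have hhoef : ∀ y, ∫ a, Real.exp (t * G (y, a)) ∂ν ≤
        Real.exp (t * g y + t ^ 2 * (c 0) ^ 2 / 8) := by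
      intro y
      apply mcd_hoeffding ν (fun a => G (y, a))
        (hGmeas.comp measurable_prodMk_left) (fun a => hGB _) _ t
      intro a a'
      have h2 : G (y, a') = f (Function.update ((0 : Fin (n + 1)).insertNth a y) 0 a') := by
        show f ((0 : Fin (n + 1)).insertNth a' y) = _
        rw [Fin.update_insertNth]
      have h4 : G (y, a) = f ((0 : Fin (n + 1)).insertNth a y) := rfl
      show |G (y, a) - G (y, a')| ≤ c 0
      rw [h2, h4]
      exact hbd _ _ _
    -- transfer integrals to the product
    have h_exp : ∫ x, Real.exp (t * f x) ∂(Measure.pi P)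
        = ∫ q, Real.exp (t * G q) ∂(τ.prod ν) := by
      rw [← mpE.integral_comp E.measurableEmbedding]
      congr 1
      funext x
      rw [hGE]
    have h_f : ∫ x, f x ∂(Measure.pi P) = ∫ q, G q ∂(τ.prod ν) := by
      rw [← mpE.integral_comp E.measurableEmbedding]
      congr 1
      funext x
      rw [hGE]
    -- integrability of the iterated pieces
    have hIinner : Integrable (fun y => ∫ a, Real.exp (t * G (y, a)) ∂ν) τ := by
      apply mcd_integrable_of_bound τ _
        ((((hGmeas.const_mul t).exp).stronglyMeasurable.integral_prod_right').measurable.aestronglyMeasurable)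
        (Real.exp (|t| * B))
      intro y
      rw [← Real.norm_eq_abs]
      calc ‖∫ a, Real.exp (t * G (y, a)) ∂ν‖ ≤ ∫ _, Real.exp (|t| * B) ∂ν := by
            apply norm_integral_le_of_norm_le (integrable_const _)
            apply Filter.Eventually.of_forall
            intro a
            rw [Real.norm_eq_abs, abs_of_pos (Real.exp_pos _)]
            apply Real.exp_le_exp.mpr
            calc t * G (y, a) ≤ |t * G (y, a)| := le_abs_self _
              _ = |t| * |G (y, a)| := abs_mul _ _
              _ ≤ |t| * B := mul_le_mul_of_nonneg_left (hGB _) (abs_nonneg t)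
        _ = Real.exp (|t| * B) := by simp
    have hIg : Integrable (fun y => Real.exp (t * g y + t ^ 2 * (c 0) ^ 2 / 8)) τ := by
      apply mcd_integrable_of_bound _ _
        (((hgmeas.const_mul t).add_const _).exp).aestronglyMeasurable
        (Real.exp (|t| * B + t ^ 2 * (c 0) ^ 2 / 8))
      intro y
      rw [abs_of_pos (Real.exp_pos _)]
      apply Real.exp_le_exp.mpr
      have : t * g y ≤ |t| * B := by
        calc t * g y ≤ |t * g y| := le_abs_self _
          _ = |t| * |g y| := abs_mul _ _
          _ ≤ |t| * B := mul_le_mul_of_nonneg_left (hgB _) (abs_nonneg t)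
      linarith
    have hIexpg : Integrable (fun y => Real.exp (t * g y)) τ :=
      mcd_integrable_of_bound _ _ ((hgmeas.const_mul t).exp).aestronglyMeasurable
        (Real.exp (|t| * B)) (by
          intro y
          rw [abs_of_pos (Real.exp_pos _)]
          apply Real.exp_le_exp.mpr
          calc t * g y ≤ |t * g y| := le_abs_self _
            _ = |t| * |g y| := abs_mul _ _
            _ ≤ |t| * B := mul_le_mul_of_nonneg_left (hgB _) (abs_nonneg t))
    -- main chain
    have hsum : ∑ i : Fin (n + 1), c i ^ 2
        = c 0 ^ 2 + ∑ j : Fin n, c ((0 : Fin (n + 1)).succAbove j) ^ 2 :=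
      Fin.sum_univ_succAbove (fun i => c i ^ 2) 0
    calc ∫ x, Real.exp (t * f x) ∂(Measure.pi P)
        = ∫ y, ∫ a, Real.exp (t * G (y, a)) ∂ν ∂τ := by
          rw [h_exp, integral_prod _ hIexpG]
      _ ≤ ∫ y, Real.exp (t * g y + t ^ 2 * (c 0) ^ 2 / 8) ∂τ :=
          integral_mono hIinner hIg hhoef
      _ = (∫ y, Real.exp (t * g y) ∂τ) * Real.exp (t ^ 2 * (c 0) ^ 2 / 8) := by
          simp_rw [Real.exp_add]
          rw [integral_mul_const]
      _ ≤ Real.exp (t * ∫ y, g y ∂τ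
            + t ^ 2 * (∑ j : Fin n, c ((0 : Fin (n + 1)).succAbove j) ^ 2) / 8)
            * Real.exp (t ^ 2 * (c 0) ^ 2 / 8) := by
          apply mul_le_mul_of_nonneg_right _ (Real.exp_pos _).le
          exact IH (fun j => 𝒳 ((0 : Fin (n + 1)).succAbove j)) _
            (fun j => P ((0 : Fin (n + 1)).succAbove j)) (fun j => hprob _)
            g hgmeas B hgB (fun j => c ((0 : Fin (n + 1)).succAbove j)) hgbd t
      _ = Real.exp (t * ∫ x, f x ∂(Measure.pi P) + t ^ 2 * (∑ i, c i ^ 2) / 8) := by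
          rw [← Real.exp_add]
          congr 1
          have hgint : ∫ y, g y ∂τ = ∫ x, f x ∂(Measure.pi P) := by
            rw [h_f, integral_prod _ hIG]
          rw [hgint, hsum]
          ring



theorem mcdiarmid_inequality {Ω : Type*} [MeasurableSpace Ω] (μ : Measure Ω)
    [IsProbabilityMeasure μ] {n : ℕ} (𝒳 : Fin n → Type*)
    [∀ i, MeasurableSpace (𝒳 i)]
    (X : ∀ i, Ω → 𝒳 i) (hXmeas : ∀ i, Measurable (X i))
    (hindep : iIndepFun X μ)
    (f : (∀ i, 𝒳 i) → ℝ) (hf : Measurable f)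
    (c : Fin n → ℝ)
    (hbd : ∀ (i : Fin n) (x : ∀ j, 𝒳 j) (x' : 𝒳 i),
      |f x - f (Function.update x i x')| ≤ c i)
    (hint : Integrable (fun ω => f (fun i => X i ω)) μ)
    (ε : ℝ) (hε : 0 < ε) :
    (μ {ω | ε ≤ |f (fun i => X i ω) - ∫ ω', f (fun i => X i ω') ∂μ|}).toReal ≤
      2 * Real.exp (-2 * ε ^ 2 / ∑ i, c i ^ 2) := by
  classical
  set m := ∫ ω', f (fun i => X i ω') ∂μ with hm
  set S := ∑ i, c i ^ 2 with hS
  have hS0 : 0 ≤ S := Finset.sum_nonneg fun i _ => sq_nonneg _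
  rcases eq_or_lt_of_le hS0 with hS' | hSpos
  · -- degenerate case: S = 0, RHS = 2
    have h1 : (μ {ω | ε ≤ |f (fun i => X i ω) - m|}).toReal ≤ 1 := by
      have h2 : μ {ω | ε ≤ |f (fun i => X i ω) - m|} ≤ 1 := prob_le_one
      have := ENNReal.toReal_mono (by simp) h2
      simpa using this
    rw [← hS', div_zero, Real.exp_zero]
    linarith
  · haveI hΩ : Nonempty Ω := mcd_nonempty μ
    set x₀ : ∀ i, 𝒳 i := fun i => X i (Classical.arbitrary Ω) with hx0
    set B := |f x₀| + ∑ i, c i with hBdef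
    have hfB : ∀ x, |f x| ≤ B := by
      intro x
      have h2 := mcd_diff_le f c hbd x x₀
      have h3 := abs_add_le (f x - f x₀) (f x₀)
      rw [sub_add_cancel] at h3
      rw [hBdef]
      linarith
    set T : Ω → ∀ i, 𝒳 i := fun ω i => X i ω with hT
    have hTmeas : Measurable T := measurable_pi_lambda _ hXmeas
    haveI hprob : ∀ i, IsProbabilityMeasure (μ.map (X i)) := fun i =>
      Measure.isProbabilityMeasure_map (hXmeas i).aemeasurable
    haveI hsf : ∀ i, SigmaFinite (μ.map (X i)) := fun i => inferInstance
    have hmap : μ.map T = Measure.pi (fun i => μ.map (X i)) := by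
      refine (Measure.pi_eq (μ := fun i => μ.map (X i)) (fun s hs => ?_)).symm
      rw [Measure.map_apply hTmeas (MeasurableSet.univ_pi hs)]
      have hpre : T ⁻¹' Set.pi Set.univ s = ⋂ i, X i ⁻¹' s i := by
        ext ω; simp [hT, Set.mem_pi]
      rw [hpre]
      have h4 := (iIndepFun_iff_measure_inter_preimage_eq_mul.mp hindep)
        Finset.univ (fun i _ => hs i)
      rw [show ⋂ i, X i ⁻¹' s i = ⋂ i ∈ Finset.univ, X i ⁻¹' s i by simp, h4]
      exact Finset.prod_congr rfl fun i _ => (Measure.map_apply (hXmeas i) (hs i)).symm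
    set ρ := Measure.pi (fun i => μ.map (X i)) with hρ
    haveI : IsProbabilityMeasure ρ := by
      rw [hρ]; infer_instance
    have hsetmeas : MeasurableSet {x : ∀ i, 𝒳 i | ε ≤ |f x - m|} :=
      measurableSet_le measurable_const (hf.sub_const m).abs
    have hμset : μ {ω | ε ≤ |f (fun i => X i ω) - m|} = ρ {x | ε ≤ |f x - m|} := by
      rw [← hmap, Measure.map_apply hTmeas hsetmeas]
      rfl
    have hm' : ∫ x, f x ∂ρ = m := by
      rw [← hmap, integral_map hTmeas.aemeasurable hf.aestronglyMeasurable]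
    set t := 4 * ε / S with ht
    have htpos : 0 < t := by positivity
    have hYmeas : Measurable (fun x : ∀ i, 𝒳 i => f x - m) := hf.sub_const m
    have hIexp : ∀ s : ℝ, Integrable (fun x => Real.exp (s * (f x - m))) ρ := by
      intro s
      apply mcd_integrable_of_bound ρ _ ((hYmeas.const_mul s).exp).aestronglyMeasurable
        (Real.exp (|s| * (B + |m|)))
      intro x
      rw [abs_of_pos (Real.exp_pos _)]
      apply Real.exp_le_exp.mpr
      calc s * (f x - m) ≤ |s * (f x - m)| := le_abs_self _
        _ = |s| * |f x - m| := abs_mul _ _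
        _ ≤ |s| * (B + |m|) := by
            apply mul_le_mul_of_nonneg_left _ (abs_nonneg s)
            calc |f x - m| ≤ |f x| + |m| := abs_sub _ _
              _ ≤ B + |m| := by linarith [hfB x]
    have hmgf : ∀ s : ℝ, mgf (fun x => f x - m) ρ s ≤ Real.exp (s ^ 2 * S / 8) := by
      intro s
      have h5 : ∀ x : ∀ i, 𝒳 i, Real.exp (s * (f x - m))
          = Real.exp (-(s * m)) * Real.exp (s * f x) := by
        intro x
        rw [← Real.exp_add]
        congr 1
        ring
      have h6 : mgf (fun x => f x - m) ρ s
          = Real.exp (-(s * m)) * ∫ x, Real.exp (s * f x) ∂ρ := by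
        rw [mgf]
        simp_rw [h5]
        rw [integral_const_mul]
      rw [h6]
      have h7 := mcd_mgf_pi n 𝒳 _ (fun i => μ.map (X i)) hprob f hf B hfB c hbd s
      rw [← hρ, hm', ← hS] at h7
      calc Real.exp (-(s * m)) * ∫ x, Real.exp (s * f x) ∂ρ
          ≤ Real.exp (-(s * m)) * Real.exp (s * m + s ^ 2 * S / 8) :=
            mul_le_mul_of_nonneg_left h7 (Real.exp_pos _).le
        _ = Real.exp (s ^ 2 * S / 8) := by
            rw [← Real.exp_add]
            congr 1
            ring
    have hup : (ρ {x | ε ≤ f x - m}).toReal ≤ Real.exp (-2 * ε ^ 2 / S) := by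
      have h7 := measure_ge_le_exp_mul_mgf (μ := ρ) (X := fun x => f x - m) (t := t)
        ε htpos.le (hIexp t)
      calc (ρ {x | ε ≤ f x - m}).toReal
          ≤ Real.exp (-t * ε) * mgf (fun x => f x - m) ρ t := h7
        _ ≤ Real.exp (-t * ε) * Real.exp (t ^ 2 * S / 8) :=
            mul_le_mul_of_nonneg_left (hmgf t) (Real.exp_pos _).le
        _ = Real.exp (-t * ε + t ^ 2 * S / 8) := (Real.exp_add _ _).symm
        _ = Real.exp (-2 * ε ^ 2 / S) := by
            congr 1
            rw [ht]
            field_simp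
            ring
    have hlow : (ρ {x | f x - m ≤ -ε}).toReal ≤ Real.exp (-2 * ε ^ 2 / S) := by
      have h7 := measure_le_le_exp_mul_mgf (μ := ρ) (X := fun x => f x - m) (t := -t)
        (-ε) (neg_nonpos.mpr htpos.le) (hIexp (-t))
      calc (ρ {x | f x - m ≤ -ε}).toReal
          ≤ Real.exp (-(-t) * -ε) * mgf (fun x => f x - m) ρ (-t) := h7
        _ ≤ Real.exp (-(-t) * -ε) * Real.exp ((-t) ^ 2 * S / 8) :=
            mul_le_mul_of_nonneg_left (hmgf (-t)) (Real.exp_pos _).le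
        _ = Real.exp (-(-t) * -ε + (-t) ^ 2 * S / 8) := (Real.exp_add _ _).symm
        _ = Real.exp (-2 * ε ^ 2 / S) := by
            congr 1
            rw [ht]
            field_simp
            ring
    have hsub : {x : ∀ i, 𝒳 i | ε ≤ |f x - m|}
        ⊆ {x | ε ≤ f x - m} ∪ {x | f x - m ≤ -ε} := by
      intro x hx
      simp only [Set.mem_setOf_eq] at hx
      simp only [Set.mem_union, Set.mem_setOf_eq]
      rcases le_abs.mp hx with h | h
      · left; exact h
      · right; linarith
    calc (μ {ω | ε ≤ |f (fun i => X i ω) - m|}).toReal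
        = (ρ {x | ε ≤ |f x - m|}).toReal := by rw [hμset]
      _ ≤ (ρ ({x | ε ≤ f x - m} ∪ {x | f x - m ≤ -ε})).toReal :=
          ENNReal.toReal_mono (measure_ne_top _ _) (measure_mono hsub)
      _ ≤ ((ρ {x | ε ≤ f x - m}) + (ρ {x | f x - m ≤ -ε})).toReal :=
          ENNReal.toReal_mono (by finiteness) (measure_union_le _ _)
      _ = (ρ {x | ε ≤ f x - m}).toReal + (ρ {x | f x - m ≤ -ε}).toReal :=
          ENNReal.toReal_add (measure_ne_top _ _) (measure_ne_top _ _)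
      _ ≤ Real.exp (-2 * ε ^ 2 / S) + Real.exp (-2 * ε ^ 2 / S) := add_le_add hup hlow
      _ = 2 * Real.exp (-2 * ε ^ 2 / S) := by ring
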